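/- Every regular ω-language F = L(A, T) satisfies the automatic Baire property: the symmetric difference L(A, T) Δ L(A, {Y : Y ⊆ Z for some Z ∈ T ∩ SCC_A^t}) is contained in L(A, 2^S \ SCC_A^t), where the former language L(A, {2^Z : Z ∈ T ∩ SCC_A^t}) is open and the latter is meagre in X^ω. -/

import Mathlib

open Set

/-- `w` is a finite prefix of the infinite word `ξ`. -/
def InfPrefix {X : Type*} (w : List X) (ξ : ℕ → X) : Prop :=
  ∀ i : Fin w.length, w.get i = ξ i.val

/-- The set of finite prefixes of elements of `F`. -/
def Pref {X : Type*} (F : Set (ℕ → X)) : Set (List X) :=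
  {w | ∃ ξ ∈ F, InfPrefix w ξ}

/-- Concatenation of a finite word in front of an infinite word. -/
def wordCat {X : Type*} (w : List X) (ξ : ℕ → X) : ℕ → X :=
  fun n => if h : n < w.length then w.get ⟨n, h⟩ else ξ (n - w.length)


/-- A deterministic automaton with initial state and transition function. -/
structure DetAuto (X S : Type*) where
  start : S
  step : S → X → S

/-- The extension of the transition function to finite words. -/
def DetAuto.run {X S : Type*} (A : DetAuto X S) (s : S) (w : List X) : S :=
  w.foldl A.step s

/-- The state reached after reading the first `n` letters of `ξ`. -/
def DetAuto.statesAt {X S : Type*} (A : DetAuto X S) (ξ : ℕ → X) (n : ℕ) : S :=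
  A.run A.start (List.ofFn fun i : Fin n => ξ i.val)

/-- `Inf(A, ξ)`: the set of states visited infinitely often on input `ξ`. -/
def AInf {X S : Type*} (A : DetAuto X S) (ξ : ℕ → X) : Set S :=
  {s | ∀ n : ℕ, ∃ m ≥ n, A.statesAt ξ m = s}

/-- Muller acceptance: `L(A, T)`. -/
def Lang {X S : Type*} (A : DetAuto X S) (T : Set (Set S)) : Set (ℕ → X) :=
  {ξ | AInf A ξ ∈ T}

/-- `LOOP_A`: the set of realizable infinity sets. -/
def Loops {X S : Type*} (A : DetAuto X S) : Set (Set S) :=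
  {Z | ∃ ξ : ℕ → X, AInf A ξ = Z}

/-- Strongly connected components: the loops maximal w.r.t. inclusion, i.e.
any other loop is contained in them or disjoint from them. -/
def IsSCC {X S : Type*} (A : DetAuto X S) (Z : Set S) : Prop :=
  Z ∈ Loops A ∧ ∀ Z' ∈ Loops A, Z' ⊆ Z ∨ Z' ∩ Z = ∅

/-- The relation `Z₁ ↦ Z₂`. -/
def ReachRel {X S : Type*} (A : DetAuto X S) (Z₁ Z₂ : Set S) : Prop :=
  Z₁ ≠ Z₂ ∧ ∃ s ∈ Z₁, ∃ w : List X, A.run s w ∈ Z₂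

/-- Terminal strongly connected components. -/
def IsTerminalSCC {X S : Type*} (A : DetAuto X S) (Z : Set S) : Prop :=
  IsSCC A Z ∧ ∀ Z' : Set S, IsSCC A Z' → Z ≠ Z' → ¬ ReachRel A Z Z'

namespace ABaire
variable {X S : Type*} (A : DetAuto X S)

lemma run_append (s : S) (w v : List X) : A.run s (w ++ v) = A.run (A.run s w) v :=
  List.foldl_append

lemma run_concat (s : S) (w : List X) (a : X) :
    A.run s (w ++ [a]) = A.step (A.run s w) a := by
  rw [run_append]; rfl

lemma statesAt_succ (ξ : ℕ → X) (n : ℕ) :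
    A.statesAt ξ (n + 1) = A.step (A.statesAt ξ n) (ξ n) := by
  have : (List.ofFn fun i : Fin (n+1) => ξ i.val)
      = (List.ofFn fun i : Fin n => ξ i.val) ++ [ξ n] := by
    rw [List.ofFn_succ']
    simp [List.concat_eq_append, Fin.castSucc]
  rw [DetAuto.statesAt, this, run_concat]; rfl

lemma statesAt_add (ξ : ℕ → X) (n m : ℕ) :
    A.statesAt ξ (n + m) = A.run (A.statesAt ξ n) (List.ofFn fun i : Fin m => ξ (n + i.val)) := by
  induction m with
  | zero => simp [DetAuto.run]
  | succ m ih =>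
      have : (List.ofFn fun i : Fin (m+1) => ξ (n + i.val))
          = (List.ofFn fun i : Fin m => ξ (n + i.val)) ++ [ξ (n + m)] := by
        rw [List.ofFn_succ']
        simp [List.concat_eq_append, Fin.castSucc]
      rw [show n + (m + 1) = (n + m) + 1 by omega, statesAt_succ, ih, this, run_concat]

lemma statesAt_congr {ξ η : ℕ → X} {n : ℕ} (h : ∀ i < n, ξ i = η i) :
    A.statesAt ξ n = A.statesAt η n := by
  unfold DetAuto.statesAt
  have : (fun i : Fin n => ξ i.val) = fun i : Fin n => η i.val := by
    funext i; exact h i i.isLt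
  rw [this]

lemma AInf_nonempty [Finite S] (ξ : ℕ → X) : (AInf A ξ).Nonempty := by
  obtain ⟨s, hs⟩ := Finite.exists_infinite_fiber (A.statesAt ξ)
  refine ⟨s, fun n => ?_⟩
  have hinf : (A.statesAt ξ ⁻¹' {s}).Infinite := Set.infinite_coe_iff.mp hs
  obtain ⟨m, hm, hmn⟩ := hinf.exists_gt n
  exact ⟨m, le_of_lt hmn, hm⟩

lemma eventually_mem_AInf [Finite S] (ξ : ℕ → X) :
    ∃ N, ∀ m ≥ N, A.statesAt ξ m ∈ AInf A ξ := by
  have h : ∀ s : S, ∃ N, ∀ m ≥ N, A.statesAt ξ m = s → s ∈ AInf A ξ := by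
    intro s
    by_cases hs : s ∈ AInf A ξ
    · exact ⟨0, fun _ _ _ => hs⟩
    · simp only [AInf, Set.mem_setOf_eq, not_forall] at hs
      obtain ⟨n, hn⟩ := hs
      push_neg at hn
      exact ⟨n, fun m hm heq => absurd (hn m hm) (by simp [heq])⟩
  choose f hf using h
  have : Finite S := inferInstance
  cases nonempty_fintype S
  refine ⟨Finset.univ.sup f, fun m hm => ?_⟩
  exact hf _ m (le_trans (Finset.le_sup (Finset.mem_univ _)) hm) rfl

lemma loops_nonempty [Finite S] {Z : Set S} (h : Z ∈ Loops A) : Z.Nonempty := by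
  obtain ⟨ξ, rfl⟩ := h; exact AInf_nonempty A ξ

lemma reachable_of_mem_loop {Z : Set S} (h : Z ∈ Loops A) {s : S} (hs : s ∈ Z) :
    ∃ p : List X, A.run A.start p = s := by
  obtain ⟨ξ, rfl⟩ := h
  obtain ⟨m, _, hm⟩ := hs 0
  exact ⟨_, hm⟩

/-- From `s` to `t` within a loop, staying inside the loop. -/
lemma reach_in_loop [Finite S] {Z : Set S} (h : Z ∈ Loops A) {s t : S}
    (hs : s ∈ Z) (ht : t ∈ Z) :
    ∃ w : List X, A.run s w = t ∧ ∀ k, A.run s (w.take k) ∈ Z := by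
  obtain ⟨ξ, rfl⟩ := h
  obtain ⟨N, hN⟩ := eventually_mem_AInf A ξ
  obtain ⟨m₁, hm₁N, hm₁⟩ := hs N
  obtain ⟨m₂, hm₂m₁, hm₂⟩ := ht m₁
  refine ⟨List.ofFn fun i : Fin (m₂ - m₁) => ξ (m₁ + i.val), ?_, ?_⟩
  · have := statesAt_add A ξ m₁ (m₂ - m₁)
    rw [show m₁ + (m₂ - m₁) = m₂ by omega] at this
    rw [← hm₁, ← this, hm₂]
  · intro k
    rcases le_or_gt (m₂ - m₁) k with hk | hk
    · rw [List.take_of_length_le (by simpa using hk)]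
      have := statesAt_add A ξ m₁ (m₂ - m₁)
      rw [show m₁ + (m₂ - m₁) = m₂ by omega] at this
      rw [← hm₁, ← this, hm₂]; exact ht
    · have htake : (List.ofFn fun i : Fin (m₂ - m₁) => ξ (m₁ + i.val)).take k
          = List.ofFn fun i : Fin k => ξ (m₁ + i.val) := by
        apply List.ext_get
        · simp only [List.length_take, List.length_ofFn]; omega
        · intro i h1 h2
          simp [List.get_ofFn]
      rw [htake, ← hm₁, ← statesAt_add]
      exact hN _ (by omega)

lemma wordCat_lt {u : List X} {ζ : ℕ → X} {i : ℕ} (h : i < u.length) :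
    wordCat u ζ i = u.get ⟨i, h⟩ := dif_pos h

lemma wordCat_ge {u : List X} {ζ : ℕ → X} {i : ℕ} (h : u.length ≤ i) :
    wordCat u ζ i = ζ (i - u.length) := dif_neg (by omega)

lemma wordCat_statesAt (u : List X) (ζ : ℕ → X) {k : ℕ} (hk : k ≤ u.length) :
    A.statesAt (wordCat u ζ) k = A.run A.start (u.take k) := by
  unfold DetAuto.statesAt
  congr 1
  apply List.ext_get
  · simp; omega
  · intro i h1 h2
    have hik : i < k := by simpa using h1
    have hiu : i < u.length := lt_of_lt_of_le hik hk
    simp only [List.get_eq_getElem, List.getElem_ofFn, List.getElem_take]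
    exact wordCat_lt hiu

lemma wordCat_statesAt_add (u : List X) (ζ : ℕ → X) (m : ℕ) :
    A.statesAt (wordCat u ζ) (u.length + m)
      = A.run (A.run A.start u) (List.ofFn fun i : Fin m => ζ i.val) := by
  rw [statesAt_add]
  have h1 : A.statesAt (wordCat u ζ) u.length = A.run A.start u := by
    rw [wordCat_statesAt A u ζ (le_refl _), List.take_length]
  rw [h1]
  have : (fun i : Fin m => wordCat u ζ (u.length + i.val)) = fun i : Fin m => ζ i.val := by
    funext i
    rw [wordCat_ge (by omega)]
    congr 1
    omega
  rw [this]

/-- The set of states along a cycle is a loop. -/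
lemma cycle_loop {s : S} {w : List X} (hw : w ≠ []) (hcyc : A.run s w = s)
    (hreach : ∃ p : List X, A.run A.start p = s) :
    (Set.range fun k : ℕ => A.run s (w.take k)) ∈ Loops A := by
  obtain ⟨p, hp⟩ := hreach
  have hL : 0 < w.length := List.length_pos_iff.mpr hw
  set L := w.length with hLdef
  set ζ : ℕ → X := fun n => w.get ⟨n % L, Nat.mod_lt _ hL⟩ with hζ
  set ξ := wordCat p ζ with hξ
  have key : ∀ m, A.run s (List.ofFn fun i : Fin m => ζ i.val)
      = A.run s (w.take (m % L)) := by
    intro m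
    induction m with
    | zero => simp [DetAuto.run, Nat.zero_mod]
    | succ m ih =>
        have hofn : (List.ofFn fun i : Fin (m+1) => ζ i.val)
            = (List.ofFn fun i : Fin m => ζ i.val) ++ [ζ m] := by
          rw [List.ofFn_succ']
          simp [List.concat_eq_append, Fin.castSucc]
        rw [hofn, run_concat, ih]
        have hmod : m % L < L := Nat.mod_lt _ hL
        have hstep : A.step (A.run s (w.take (m % L))) (ζ m)
            = A.run s (w.take (m % L + 1)) := by
          rw [← run_concat]
          congr 1
          rw [show ζ m = w[m % L] from rfl]
          exact List.take_concat_get' w (m % L) hmod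
        rw [hstep]
        have hm1 : (m + 1) % L = (m % L + 1) % L := by
          conv_lhs => rw [← Nat.mod_add_div m L]
          rw [show m % L + L * (m / L) + 1 = (m % L + 1) + L * (m / L) by omega,
            Nat.add_mul_mod_self_left]
        rcases eq_or_lt_of_le (show m % L + 1 ≤ L by omega) with he | hlt
        · rw [hm1, he, Nat.mod_self, List.take_length, List.take_zero, hcyc]
          rfl
        · rw [hm1, Nat.mod_eq_of_lt hlt]
  have key2 : ∀ m, A.statesAt ξ (p.length + m) = A.run s (w.take (m % L)) := by
    intro m
    rw [hξ, wordCat_statesAt_add, hp, key]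
  refine ⟨ξ, ?_⟩
  ext x
  constructor
  · intro hx
    obtain ⟨m, hm, hms⟩ := hx p.length
    obtain ⟨d, rfl⟩ : ∃ d, m = p.length + d := ⟨m - p.length, by omega⟩
    rw [key2] at hms
    exact ⟨d % L, hms⟩
  · rintro ⟨k, rfl⟩
    set k' := if k < L then k else 0 with hk'
    have hval : A.run s (w.take k) = A.run s (w.take k') := by
      rw [hk']
      split
      · rfl
      · rw [List.take_of_length_le (by omega), List.take_zero, hcyc]; rfl
    intro n
    refine ⟨p.length + ((n+1) * L + k'), by nlinarith [Nat.zero_le p.length], ?_⟩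
    rw [key2]
    have : ((n+1) * L + k') % L = k' := by
      rw [show (n+1) * L + k' = k' + L * (n+1) by ring, Nat.add_mul_mod_self_left]
      apply Nat.mod_eq_of_lt
      rw [hk']; split <;> omega
    rw [this]
    exact hval.symm

/-- A tour from `x` within a loop `Z` visiting all given states of `Z`, staying in `Z`. -/
lemma tour [Finite S] {Z : Set S} (h : Z ∈ Loops A) {s : S} (hs : s ∈ Z) (F : Finset S)
    (hF : ↑F ⊆ Z) :
    ∃ w : List X, A.run s w ∈ Z ∧ (∀ k, A.run s (w.take k) ∈ Z) ∧
      ∀ z ∈ F, ∃ k ≤ w.length, A.run s (w.take k) = z := by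
  classical
  induction F using Finset.induction_on with
  | empty => exact ⟨[], hs, fun k => by simpa [DetAuto.run] using hs, by simp⟩
  | @insert a F ha ih =>
      obtain ⟨w, hwZ, hwstay, hwvisit⟩ := ih (by
        intro z hz
        exact hF (by simp [hz]))
      have haZ : a ∈ Z := hF (by simp)
      obtain ⟨v, hv, hvstay⟩ := reach_in_loop A h hwZ haZ
      refine ⟨w ++ v, ?_, ?_, ?_⟩
      · rw [run_append, hv]; exact haZ
      · intro k
        rcases le_or_gt k w.length with hk | hk
        · rw [List.take_append_of_le_length hk]; exact hwstay k
        · obtain ⟨j, rfl⟩ : ∃ j, k = w.length + j := ⟨k - w.length, by omega⟩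
          rw [List.take_length_add_append, run_append]
          exact hvstay j
      · intro z hz
        rcases Finset.mem_insert.mp hz with rfl | hzF
        · refine ⟨(w ++ v).length, le_refl _, ?_⟩
          rw [List.take_length, run_append, hv]
        · obtain ⟨k, hk, hkz⟩ := hwvisit z hzF
          refine ⟨k, by simp; omega, ?_⟩
          rw [List.take_append_of_le_length hk]
          exact hkz

/-- Full tour-cycle: from `x ∈ Z` back to `x`, staying in `Z` and visiting all of `Z`. -/
lemma tour_cycle [Finite S] {Z : Set S} (h : Z ∈ Loops A) {x : S} (hx : x ∈ Z) :
    ∃ u : List X, A.run x u = x ∧ (∀ k, A.run x (u.take k) ∈ Z) ∧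
      ∀ z ∈ Z, ∃ k ≤ u.length, A.run x (u.take k) = z := by
  obtain ⟨w, hwZ, hwstay, hwvisit⟩ := tour A h hx Z.toFinite.toFinset
    (by simp [Set.Finite.coe_toFinset])
  obtain ⟨v, hv, hvstay⟩ := reach_in_loop A h hwZ hx
  refine ⟨w ++ v, by rw [run_append, hv], ?_, ?_⟩
  · intro k
    rcases le_or_gt k w.length with hk | hk
    · rw [List.take_append_of_le_length hk]; exact hwstay k
    · obtain ⟨j, rfl⟩ : ∃ j, k = w.length + j := ⟨k - w.length, by omega⟩
      rw [List.take_length_add_append, run_append]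
      exact hvstay j
  · intro z hz
    obtain ⟨k, hk, hkz⟩ := hwvisit z (by simp [Set.Finite.mem_toFinset, hz])
    refine ⟨k, by simp; omega, ?_⟩
    rw [List.take_append_of_le_length hk]
    exact hkz

/-- The union of two intersecting loops is a loop. -/
lemma union_loops [Finite S] {Z₁ Z₂ : Set S} (h₁ : Z₁ ∈ Loops A) (h₂ : Z₂ ∈ Loops A)
    (hint : (Z₁ ∩ Z₂).Nonempty) : Z₁ ∪ Z₂ ∈ Loops A := by
  obtain ⟨x, hx₁, hx₂⟩ := hint
  by_cases hsub : Z₂ ⊆ Z₁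
  · rwa [Set.union_eq_self_of_subset_right hsub]
  obtain ⟨u₁, hu₁, hu₁stay, hu₁visit⟩ := tour_cycle A h₁ hx₁
  obtain ⟨u₂, hu₂, hu₂stay, hu₂visit⟩ := tour_cycle A h₂ hx₂
  obtain ⟨b, hb₂, hb₁⟩ := Set.not_subset.mp hsub
  set c := u₁ ++ u₂ with hc
  have hcyc : A.run x c = x := by rw [hc, run_append, hu₁, hu₂]
  have hcne : c ≠ [] := by
    intro hnil
    obtain ⟨k, hk, hkb⟩ := hu₂visit b hb₂
    have : u₂ = [] := by
      rcases List.append_eq_nil_iff.mp hnil with ⟨-, h⟩; exact h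
    rw [this] at hk hkb
    simp at hk
    rw [hk] at hkb
    simp [DetAuto.run] at hkb
    exact hb₁ (hkb ▸ hx₁)
  have hC := cycle_loop A hcne hcyc (reachable_of_mem_loop A h₁ hx₁)
  have hCeq : (Set.range fun k : ℕ => A.run x (c.take k)) = Z₁ ∪ Z₂ := by
    apply Set.Subset.antisymm
    · rintro y ⟨k, rfl⟩
      rcases le_or_gt k u₁.length with hk | hk
      · left
        show A.run x (List.take k (u₁ ++ u₂)) ∈ Z₁
        rw [List.take_append_of_le_length hk]
        exact hu₁stay k
      · right
        obtain ⟨j, rfl⟩ : ∃ j, k = u₁.length + j := ⟨k - u₁.length, by omega⟩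
        show A.run x (List.take (u₁.length + j) (u₁ ++ u₂)) ∈ Z₂
        rw [List.take_length_add_append, run_append, hu₁]
        exact hu₂stay j
    · rintro y (hy | hy)
      · obtain ⟨k, hk, hkz⟩ := hu₁visit y hy
        refine ⟨k, ?_⟩
        show A.run x (List.take k (u₁ ++ u₂)) = y
        rw [List.take_append_of_le_length (by omega)]
        exact hkz
      · obtain ⟨k, hk, hkz⟩ := hu₂visit y hy
        refine ⟨u₁.length + k, ?_⟩
        show A.run x (List.take (u₁.length + k) (u₁ ++ u₂)) = y
        rw [List.take_length_add_append, run_append, hu₁]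
        exact hkz
  rwa [hCeq] at hC

lemma set_finite {α : Type*} [Finite α] (s : Set (Set α)) : s.Finite := Set.toFinite s

/-- Every loop is contained in an SCC. -/
lemma exists_scc [Finite S] {Z : Set S} (h : Z ∈ Loops A) :
    ∃ W, IsSCC A W ∧ Z ⊆ W := by
  obtain ⟨W, ⟨hWl, hZW⟩, hmax⟩ := Set.Finite.exists_maximalFor (id : Set S → Set S)
    {W | W ∈ Loops A ∧ Z ⊆ W} (set_finite _) ⟨Z, h, le_refl _⟩
  refine ⟨W, ⟨hWl, ?_⟩, hZW⟩
  intro Z' hZ'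
  by_cases hint : (Z' ∩ W).Nonempty
  · left
    have hUnion : W ∪ Z' ∈ Loops A := union_loops A hWl hZ'
      (by rwa [Set.inter_comm] at hint; )
    have := @hmax (W ∪ Z') ⟨hUnion, hZW.trans Set.subset_union_left⟩ Set.subset_union_left
    intro y hy
    rw [show W = W ∪ Z' from Set.Subset.antisymm Set.subset_union_left this]
    exact Or.inr hy
  · right
    rw [Set.not_nonempty_iff_eq_empty] at hint
    exact hint

/-- Two SCCs that intersect are equal. -/
lemma scc_eq_of_inter {Z₁ Z₂ : Set S} (h₁ : IsSCC A Z₁) (h₂ : IsSCC A Z₂)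
    (hint : (Z₁ ∩ Z₂).Nonempty) : Z₁ = Z₂ := by
  rcases h₂.2 Z₁ h₁.1 with hs | he
  · rcases h₁.2 Z₂ h₂.1 with hs' | he'
    · exact Set.Subset.antisymm hs hs'
    · exact absurd (he' ▸ (Set.inter_comm Z₁ Z₂ ▸ hint)) (by simp [Set.not_nonempty_empty, he'])
  · exact absurd (he ▸ hint) (by simp [he])

/-- Mutual reachability between SCCs implies equality. -/
lemma scc_antisym [Finite S] {Z₁ Z₂ : Set S} (h₁ : IsSCC A Z₁) (h₂ : IsSCC A Z₂)
    (r₁₂ : ∃ s ∈ Z₁, ∃ w : List X, A.run s w ∈ Z₂)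
    (r₂₁ : ∃ s ∈ Z₂, ∃ w : List X, A.run s w ∈ Z₁) : Z₁ = Z₂ := by
  obtain ⟨s₁, hs₁, u, hu⟩ := r₁₂
  obtain ⟨s₂, hs₂, v, hv⟩ := r₂₁
  obtain ⟨b₂, hb₂, -⟩ := reach_in_loop A h₂.1 hu hs₂
  obtain ⟨b₁, hb₁, -⟩ := reach_in_loop A h₁.1 hv hs₁
  set c := u ++ (b₂ ++ (v ++ b₁)) with hc
  have hcyc : A.run s₁ c = s₁ := by
    rw [hc, run_append, run_append, hb₂, run_append, hb₁]
  rcases eq_or_ne c [] with hnil | hcne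
  · have hu0 : u = [] := by rcases List.append_eq_nil_iff.mp hnil with ⟨h, -⟩; exact h
    rw [hu0] at hu
    exact scc_eq_of_inter A h₁ h₂ ⟨s₁, hs₁, hu⟩
  · have hC := cycle_loop A hcne hcyc (reachable_of_mem_loop A h₁.1 hs₁)
    have hs₁C : s₁ ∈ Set.range fun k : ℕ => A.run s₁ (c.take k) := ⟨0, rfl⟩
    have ht₂C : A.run s₁ u ∈ Set.range fun k : ℕ => A.run s₁ (c.take k) :=
      ⟨u.length, by show A.run s₁ (c.take u.length) = A.run s₁ u; rw [hc, List.take_left]⟩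
    have hC1 : (Set.range fun k : ℕ => A.run s₁ (c.take k)) ⊆ Z₁ := by
      rcases h₁.2 _ hC with hs | he
      · exact hs
      · exact absurd (Set.eq_empty_iff_forall_notMem.mp he s₁) (by simp [hs₁C, hs₁])
    exact scc_eq_of_inter A h₁ h₂ ⟨A.run s₁ u, hC1 ht₂C, hu⟩

/-- If a run visits a terminal SCC, its infinity set is inside it. -/
lemma AInf_subset_of_visit [Finite S] {Z : Set S} (hZ : IsTerminalSCC A Z) {ξ : ℕ → X}
    {N : ℕ} (hN : A.statesAt ξ N ∈ Z) : AInf A ξ ⊆ Z := by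
  have hZ' : AInf A ξ ∈ Loops A := ⟨ξ, rfl⟩
  obtain ⟨W, hW, hsub⟩ := exists_scc A hZ'
  rcases eq_or_ne Z W with rfl | hne
  · exact hsub
  · exfalso
    apply hZ.2 W hW hne
    refine ⟨hne, A.statesAt ξ N, hN, ?_⟩
    obtain ⟨z', hz'⟩ := AInf_nonempty A ξ
    obtain ⟨m, hm, hms⟩ := hz' N
    refine ⟨List.ofFn fun i : Fin (m - N) => ξ (N + i.val), ?_⟩
    have := statesAt_add A ξ N (m - N)
    rw [show N + (m - N) = m by omega] at this
    rw [← this, hms]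
    exact hsub hz'

/-- Terminal SCCs are invariant under transitions. -/
lemma terminal_invariant [Finite S] [Nonempty X] {Z : Set S} (hZ : IsTerminalSCC A Z)
    {s : S} (hs : s ∈ Z) (w : List X) : A.run s w ∈ Z := by
  rcases eq_or_ne w [] with rfl | hw
  · exact hs
  obtain ⟨p, hp⟩ := reachable_of_mem_loop A hZ.1.1 hs
  set ζ : ℕ → X := fun _ => Classical.arbitrary X with hζ
  set ξ := wordCat (p ++ w) ζ with hξ
  have hstart : A.statesAt ξ p.length = s := by
    rw [hξ, wordCat_statesAt A _ _ (by simp), List.take_append_of_le_length (le_refl _),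
      List.take_length, hp]
  have hsubZ : AInf A ξ ⊆ Z := AInf_subset_of_visit A hZ (hstart ▸ hs)
  have ht : A.statesAt ξ (p ++ w).length = A.run s w := by
    rw [hξ, wordCat_statesAt A _ _ (le_refl _), List.take_length, run_append, hp]
  obtain ⟨z', hz'⟩ := AInf_nonempty A ξ
  obtain ⟨m, hm, hms⟩ := hz' (p ++ w).length
  set d := List.ofFn fun i : Fin (m - (p ++ w).length) => ξ ((p ++ w).length + i.val) with hd
  have hrd : A.run (A.run s w) d = z' := by
    have := statesAt_add A ξ (p ++ w).length (m - (p ++ w).length)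
    rw [show (p ++ w).length + (m - (p ++ w).length) = m by omega] at this
    rw [← ht, ← this, hms]
  have hz'Z : z' ∈ Z := hsubZ hz'
  obtain ⟨e, he, -⟩ := reach_in_loop A hZ.1.1 hz'Z hs
  set c := w ++ (d ++ e) with hc
  have hcyc : A.run s c = s := by
    rw [hc, run_append, run_append, hrd, he]
  have hcne : c ≠ [] := by
    rw [hc]; simp [hw]
  have hC := cycle_loop A hcne hcyc ⟨p, hp⟩
  have hsC : s ∈ Set.range fun k : ℕ => A.run s (c.take k) := ⟨0, rfl⟩
  have htC : A.run s w ∈ Set.range fun k : ℕ => A.run s (c.take k) :=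
    ⟨w.length, by show A.run s (c.take w.length) = A.run s w; rw [hc, List.take_left]⟩
  rcases hZ.1.2 _ hC with hsub | hemp
  · exact hsub htC
  · exact absurd (Set.eq_empty_iff_forall_notMem.mp hemp s) (by simp [hsC, hs])

/-- Reachability between state sets. -/
def SReach (A : DetAuto X S) (Z Z' : Set S) : Prop :=
  ∃ x ∈ Z, ∃ w : List X, A.run x w ∈ Z'

lemma sreach_trans [Finite S] {Z₁ Z₂ Z₃ : Set S} (h₂ : Z₂ ∈ Loops A)
    (h12 : SReach A Z₁ Z₂) (h23 : SReach A Z₂ Z₃) : SReach A Z₁ Z₃ := by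
  obtain ⟨x, hx, w, hw⟩ := h12
  obtain ⟨y, hy, v, hv⟩ := h23
  obtain ⟨e, he, -⟩ := reach_in_loop A h₂ hw hy
  exact ⟨x, hx, w ++ (e ++ v), by rw [run_append, run_append, he]; exact hv⟩

lemma climb [Finite S] : ∀ n : ℕ, ∀ Z : Set S, IsSCC A Z →
    {Z' : Set S | IsSCC A Z' ∧ SReach A Z Z'}.ncard ≤ n →
    ∃ Zt, IsTerminalSCC A Zt ∧ SReach A Z Zt := by
  intro n
  induction n with
  | zero =>
      intro Z hZ hcard
      exfalso
      obtain ⟨x, hx⟩ := loops_nonempty A hZ.1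
      have hmem : Z ∈ {Z' : Set S | IsSCC A Z' ∧ SReach A Z Z'} := ⟨hZ, x, hx, [], hx⟩
      have := Set.ncard_eq_zero (set_finite _) |>.mp (Nat.le_zero.mp hcard)
      rw [this] at hmem
      exact hmem
  | succ n ih =>
      intro Z hZ hcard
      by_cases hterm : IsTerminalSCC A Z
      · obtain ⟨x, hx⟩ := loops_nonempty A hZ.1
        exact ⟨Z, hterm, x, hx, [], hx⟩
      · have : ∃ Z', IsSCC A Z' ∧ Z ≠ Z' ∧ ReachRel A Z Z' := by
          unfold IsTerminalSCC at hterm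
          push_neg at hterm
          exact hterm hZ
        obtain ⟨Z', hZ', hne, hrr⟩ := this
        have hsr : SReach A Z Z' := hrr.2
        have hsubset : {W : Set S | IsSCC A W ∧ SReach A Z' W}
            ⊆ {W : Set S | IsSCC A W ∧ SReach A Z W} := by
          rintro W ⟨hW, hr⟩
          exact ⟨hW, sreach_trans A hZ'.1 hsr hr⟩
        have hZmem : Z ∈ {W : Set S | IsSCC A W ∧ SReach A Z W} := by
          obtain ⟨x, hx⟩ := loops_nonempty A hZ.1
          exact ⟨hZ, x, hx, [], hx⟩
        have hZnot : Z ∉ {W : Set S | IsSCC A W ∧ SReach A Z' W} := by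
          rintro ⟨-, hr⟩
          exact hne (scc_antisym A hZ hZ' hsr hr)
        have hss : {W : Set S | IsSCC A W ∧ SReach A Z' W}
            ⊂ {W : Set S | IsSCC A W ∧ SReach A Z W} :=
          (Set.ssubset_iff_of_subset hsubset).mpr ⟨Z, hZmem, hZnot⟩
        have hlt := Set.ncard_lt_ncard hss (set_finite _)
        obtain ⟨Zt, hZt, hr⟩ := ih Z' hZ' (by omega)
        exact ⟨Zt, hZt, sreach_trans A hZ'.1 hsr hr⟩

/-- From every reachable state, some terminal SCC is reachable. -/
lemma exists_terminal_from [Finite S] [Nonempty X] (s : S)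
    (hreach : ∃ p : List X, A.run A.start p = s) :
    ∃ Z, IsTerminalSCC A Z ∧ ∃ w : List X, A.run s w ∈ Z := by
  obtain ⟨p, hp⟩ := hreach
  set ζ : ℕ → X := fun _ => Classical.arbitrary X with hζ
  set ξ := wordCat p ζ with hξ
  have hloop : AInf A ξ ∈ Loops A := ⟨ξ, rfl⟩
  obtain ⟨Z₁, hZ₁, hsub⟩ := exists_scc A hloop
  obtain ⟨z', hz'⟩ := AInf_nonempty A ξ
  obtain ⟨m, hm, hms⟩ := hz' p.length
  have hd : A.run s (List.ofFn fun i : Fin (m - p.length) => ξ (p.length + i.val)) = z' := by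
    have := statesAt_add A ξ p.length (m - p.length)
    rw [show p.length + (m - p.length) = m by omega] at this
    have hs0 : A.statesAt ξ p.length = s := by
      rw [hξ, wordCat_statesAt A _ _ (le_refl _), List.take_length, hp]
    rw [← hs0, ← this, hms]
  obtain ⟨Zt, hZt, x, hx, v, hv⟩ := climb A _ Z₁ hZ₁ (le_refl _)
  obtain ⟨e, he, -⟩ := reach_in_loop A hZ₁.1 (hd ▸ hsub hz' : _ ∈ Z₁) hx
  refine ⟨Zt, hZt, (List.ofFn fun i : Fin (m - p.length) => ξ (p.length + i.val)) ++ (e ++ v), ?_⟩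
  rw [hd] at he
  rw [run_append, run_append, hd, he]
  exact hv

section Topo
variable [TopologicalSpace X] [DiscreteTopology X]

lemma cylinder_isOpen (ξ : ℕ → X) (N : ℕ) :
    IsOpen {η : ℕ → X | ∀ i < N, η i = ξ i} := by
  have heq : {η : ℕ → X | ∀ i < N, η i = ξ i}
      = ⋂ i ∈ Finset.range N, (fun η : ℕ → X => η i) ⁻¹' {ξ i} := by
    ext η
    simp [Finset.mem_range]
  rw [heq]
  exact isOpen_biInter_finset fun i _ =>
    (continuous_apply i).isOpen_preimage _ (isOpen_discrete _)

lemma exists_cylinder_subset {O : Set (ℕ → X)} (hO : IsOpen O) {ξ : ℕ → X} (hξ : ξ ∈ O) :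
    ∃ N, {η : ℕ → X | ∀ i < N, η i = ξ i} ⊆ O := by
  obtain ⟨I, u, hu, hsub⟩ := isOpen_pi_iff.mp hO ξ hξ
  refine ⟨(I.sup id) + 1, fun η hη => hsub ?_⟩
  intro i hi
  have : η i = ξ i := hη i (by
    have := Finset.le_sup (f := id) hi
    simp at this
    omega)
  rw [this]
  exact (hu i hi).2

end Topo

/-- The generic sets used in the meagreness proof. -/
def USet (A : DetAuto X S) (n : ℕ) : Set (ℕ → X) :=
  {ξ | ∃ m, n ≤ m ∧ ∃ Z, IsTerminalSCC A Z ∧ A.statesAt ξ m ∈ Z ∧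
    ∀ z ∈ Z, ∃ k, n ≤ k ∧ k ≤ m ∧ A.statesAt ξ k = z}

section Topo2
variable [TopologicalSpace X] [DiscreteTopology X]

lemma USet_isOpen (n : ℕ) : IsOpen (USet A n) := by
  rw [isOpen_iff_forall_mem_open]
  rintro ξ ⟨m, hnm, Z, hZ, hmZ, hvis⟩
  refine ⟨{η : ℕ → X | ∀ i < m, η i = ξ i}, ?_, cylinder_isOpen ξ m, fun i _ => rfl⟩
  rintro η hη
  have hst : ∀ k ≤ m, A.statesAt η k = A.statesAt ξ k := fun k hk =>
    statesAt_congr A fun i hi => hη i (by omega)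
  refine ⟨m, hnm, Z, hZ, by rw [hst m (le_refl m)]; exact hmZ, fun z hz => ?_⟩
  obtain ⟨k, h1, h2, h3⟩ := hvis z hz
  exact ⟨k, h1, h2, by rw [hst k h2]; exact h3⟩

lemma USet_dense [Finite S] [Nonempty X] (n : ℕ) : Dense (USet A n) := by
  rw [dense_iff_inter_open]
  rintro O hO ⟨ξ, hξ⟩
  obtain ⟨N', hN'⟩ := exists_cylinder_subset hO hξ
  set N := max N' n with hN
  set p := List.ofFn fun i : Fin N => ξ i.val with hp
  set s := A.run A.start p with hs
  obtain ⟨Z, hZ, w, hw⟩ := exists_terminal_from A s ⟨p, rfl⟩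
  obtain ⟨tw, htwZ, -, htwvis⟩ := tour A hZ.1.1 hw Z.toFinite.toFinset
    (by simp [Set.Finite.coe_toFinset])
  set u := (p ++ w) ++ tw with hu
  set ζ : ℕ → X := fun _ => Classical.arbitrary X with hζ
  set η := wordCat u ζ with hη
  have hpu : p.length ≤ u.length := by simp [hu]
  have hpN : p.length = N := by simp [hp]
  have hNn : n ≤ N := le_max_right _ _
  have hrunpw : A.run A.start (p ++ w) = A.run s w := by rw [run_append, hs]
  refine ⟨η, hN' ?_, ?_⟩
  · intro i hi
    have hiN : i < N := by omega
    have hiu : i < u.length := by simp [hu, hp]; omega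
    rw [hη, wordCat_lt hiu]
    have hip : i < p.length := by simp [hp]; omega
    have h1 : u.get ⟨i, hiu⟩ = p.get ⟨i, hip⟩ := by
      show ((p ++ w) ++ tw).get ⟨i, hiu⟩ = p.get ⟨i, hip⟩
      rw [List.get_eq_getElem, List.get_eq_getElem,
        List.getElem_append_left (by simp [hp]; omega),
        List.getElem_append_left hip]
    rw [h1]
    simp [hp, List.get_ofFn]
  · refine ⟨u.length, ?_, Z, hZ, ?_, ?_⟩
    · omega
    · rw [hη, wordCat_statesAt A _ _ (le_refl _), List.take_length, hu, run_append, hrunpw]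
      exact htwZ
    · intro z hz
      obtain ⟨k, hk, hkz⟩ := htwvis z (by simp [Set.Finite.mem_toFinset, hz])
      refine ⟨(p ++ w).length + k, ?_, ?_, ?_⟩
      · simp; omega
      · simp [hu]; omega
      · rw [hη, wordCat_statesAt A _ _ (by simp [hu]; omega), hu, List.take_length_add_append,
          run_append, hrunpw, hkz]

lemma USet_inter_subset [Finite S] [Nonempty X] :
    (⋂ n, USet A n) ⊆ {ξ | IsTerminalSCC A (AInf A ξ)} := by
  intro ξ hξ
  obtain ⟨m₀, -, Z₀, hZ₀, hm₀, -⟩ := Set.mem_iInter.mp hξ 0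
  have hafter : ∀ j, m₀ ≤ j → A.statesAt ξ j ∈ Z₀ := by
    intro j hj
    obtain ⟨d, rfl⟩ : ∃ d, j = m₀ + d := ⟨j - m₀, by omega⟩
    rw [statesAt_add]
    exact terminal_invariant A hZ₀ hm₀ _
  have hsub : AInf A ξ ⊆ Z₀ := by
    intro x hx
    obtain ⟨m, hm, hms⟩ := hx m₀
    exact hms ▸ hafter m hm
  have hsup : Z₀ ⊆ AInf A ξ := by
    intro z hz n
    obtain ⟨m, hnm, Z₁, hZ₁, hmZ₁, hvis⟩ := Set.mem_iInter.mp hξ (max n (m₀ + 1))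
    have hmZ₀ : A.statesAt ξ m ∈ Z₀ := hafter m (by omega)
    have hZeq : Z₁ = Z₀ := scc_eq_of_inter A hZ₁.1 hZ₀.1 ⟨_, hmZ₁, hmZ₀⟩
    obtain ⟨k, hk1, hk2, hk3⟩ := hvis z (hZeq ▸ hz)
    exact ⟨k, by omega, hk3⟩
  have heq : AInf A ξ = Z₀ := Set.Subset.antisymm hsub hsup
  show IsTerminalSCC A (AInf A ξ)
  rw [heq]
  exact hZ₀

end Topo2

end ABaire

open ABaire

/-- The automatic Baire property for regular ω-languages:
L(A,T) Δ L(A, {Y : Y ⊆ Z for some terminal SCC Z ∈ T}) ⊆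
L(A, {Y : Y is not a terminal SCC}), the former approximating language being
open and the latter meagre. -/
theorem automatic_baire {X S : Type*} [Fintype X] [Fintype S]
    [TopologicalSpace X] [DiscreteTopology X]
    (A : DetAuto X S) (T : Set (Set S)) :
    symmDiff (Lang A T)
        (Lang A {Y : Set S | ∃ Z ∈ T, IsTerminalSCC A Z ∧ Y ⊆ Z}) ⊆
      Lang A {Y : Set S | ¬ IsTerminalSCC A Y} ∧
    IsOpen (Lang A {Y : Set S | ∃ Z ∈ T, IsTerminalSCC A Z ∧ Y ⊆ Z}) ∧
    IsMeagre (Lang A {Y : Set S | ¬ IsTerminalSCC A Y}) := by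
  classical
  refine ⟨?_, ?_⟩
  · -- symmetric difference
    intro ξ hξ
    show ¬ IsTerminalSCC A (AInf A ξ)
    intro hterm
    rcases Set.mem_symmDiff.mp hξ with ⟨h1, h2⟩ | ⟨h1, h2⟩
    · exact h2 ⟨AInf A ξ, h1, hterm, subset_refl _⟩
    · obtain ⟨Z, hZT, hZterm, hsub⟩ := h1
      obtain ⟨x, hx⟩ := AInf_nonempty A ξ
      have heq : AInf A ξ = Z := scc_eq_of_inter A hterm.1 hZterm.1 ⟨x, hx, hsub hx⟩
      exact h2 (show AInf A ξ ∈ T from heq ▸ hZT)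
  rcases isEmpty_or_nonempty X with hX | hX
  · have hE : IsEmpty (ℕ → X) := ⟨fun ξ => hX.false (ξ 0)⟩
    constructor
    · rw [Set.eq_empty_of_isEmpty (Lang A {Y : Set S | ∃ Z ∈ T, IsTerminalSCC A Z ∧ Y ⊆ Z})]
      exact isOpen_empty
    · rw [Set.eq_empty_of_isEmpty (Lang A {Y : Set S | ¬ IsTerminalSCC A Y})]
      exact IsMeagre.empty
  constructor
  · -- openness
    rw [isOpen_iff_forall_mem_open]
    intro ξ hξ
    obtain ⟨Z, hZT, hZterm, hsub⟩ := hξ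
    obtain ⟨x, hx⟩ := AInf_nonempty A ξ
    obtain ⟨m, -, hms⟩ := hx 0
    refine ⟨{η : ℕ → X | ∀ i < m, η i = ξ i}, ?_, cylinder_isOpen ξ m, fun i _ => rfl⟩
    intro η hη
    have hstc : A.statesAt η m = A.statesAt ξ m := statesAt_congr A fun i hi => hη i hi
    have hmZ : A.statesAt η m ∈ Z := by rw [hstc, hms]; exact hsub hx
    exact ⟨Z, hZT, hZterm, AInf_subset_of_visit A hZterm hmZ⟩
  · -- meagreness
    show (Lang A {Y : Set S | ¬ IsTerminalSCC A Y})ᶜ ∈ residual _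
    have hsub : (⋂ n, USet A n) ⊆ (Lang A {Y : Set S | ¬ IsTerminalSCC A Y})ᶜ :=
      fun ξ hξ hmem => hmem (USet_inter_subset A hξ)
    refine Filter.mem_of_superset ?_ hsub
    exact countable_iInter_mem.mpr fun n =>
      residual_of_dense_open (USet_isOpen A n) (USet_dense A n)
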